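/- Let m ≥ 1, n ≥ 1, 0 < x₁ < x₂ < … < x_n, and χ ∈ (0, m). Define the degree-n polynomial f(u) = Σ_{j=1}^n m·u·∏_{i ≠ j}(u − x_i^m) − χ·n·∏_{i=1}^n (u − x_i^m). Then f has exactly one real root in each of the n intervals (−∞, 0), (x₁^m, x₂^m), (x₂^m, x₃^m), …, (x_{n-1}^m, x_n^m), and these account for all n complex roots of f. -/

import Mathlib

/-- The real polynomial `f(u) = Σ_j m u ∏_{i≠j}(u - x_i^m) - χ n ∏_i (u - x_i^m)`. -/
noncomputable def stmt6f (m n : ℕ) (x : Fin n → ℝ) (χ : ℝ) (u : ℝ) : ℝ :=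
  (∑ j : Fin n, (m : ℝ) * u * ∏ i ∈ Finset.univ.erase j, (u - x i ^ m)) -
    χ * n * ∏ i : Fin n, (u - x i ^ m)

/-- The complexification of `stmt6f`. -/
noncomputable def stmt6fC (m n : ℕ) (x : Fin n → ℝ) (χ : ℝ) (u : ℂ) : ℂ :=
  (∑ j : Fin n, (m : ℂ) * u * ∏ i ∈ Finset.univ.erase j, (u - (x i : ℂ) ^ m)) -
    (χ : ℂ) * n * ∏ i : Fin n, (u - (x i : ℂ) ^ m)

open Polynomial Finset

lemma ivt_root {f : ℝ → ℝ} (hf : Continuous f) {a b : ℝ} (hab : a < b)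
    (h : f a * f b < 0) : ∃ u ∈ Set.Ioo a b, f u = 0 := by
  rcases mul_neg_iff.1 h with ⟨ha, hb⟩ | ⟨ha, hb⟩
  · have : (0:ℝ) ∈ Set.Ioo (f b) (f a) := ⟨hb, ha⟩
    have := intermediate_value_Ioo' hab.le hf.continuousOn this
    obtain ⟨u, hu, hu0⟩ := this
    exact ⟨u, hu, hu0⟩
  · have : (0:ℝ) ∈ Set.Ioo (f a) (f b) := ⟨ha, hb⟩
    obtain ⟨u, hu, hu0⟩ := intermediate_value_Ioo hab.le hf.continuousOn this
    exact ⟨u, hu, hu0⟩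

lemma prod_neg' {α : Type*} (s : Finset α) (g : α → ℝ) :
    ∏ i ∈ s, (-(g i)) = (-1)^s.card * ∏ i ∈ s, g i := by
  rw [prod_congr rfl (fun i _ => by ring : ∀ i ∈ s, -(g i) = (-1) * g i),
    prod_mul_distrib, prod_const]

-- counting lemma
lemma count_roots_aux (n : ℕ) (hn : 1 ≤ n) (P : Polynomial ℝ) (hPne : P ≠ 0)
    (hPdeg : P.natDegree = n) (ρ : ℕ → ℝ)
    (hmono : ∀ a b, a < b → b < n → ρ a < ρ b)
    (hroot : ∀ k, k < n → P.eval (ρ k) = 0) :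
    (∀ u : ℝ, P.eval u = 0 → ∃ k, k < n ∧ ρ k = u) ∧
    (∀ z : ℂ, (P.map (algebraMap ℝ ℂ)).eval z = 0 → ∃ k, k < n ∧ (ρ k : ℂ) = z) := by
  have hinj : Set.InjOn ρ (Finset.range n) := by
    intro a ha b hb hab
    simp only [coe_range, Set.mem_Iio] at ha hb
    rcases lt_trichotomy a b with h | h | h
    · exact absurd hab (hmono a b h hb).ne
    · exact h
    · exact absurd hab.symm (hmono b a h ha).ne
  constructor
  · intro u hu
    set T : Finset ℝ := (Finset.range n).image ρ with hT
    have hTcard : T.card = n := by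
      rw [hT, Finset.card_image_of_injOn hinj, Finset.card_range]
    have hTsub : T ⊆ P.roots.toFinset := by
      intro v hv
      rw [hT, Finset.mem_image] at hv
      obtain ⟨k, hk, rfl⟩ := hv
      rw [Multiset.mem_toFinset, mem_roots hPne]
      exact hroot k (Finset.mem_range.1 hk)
    have hle : P.roots.toFinset.card ≤ n := by
      calc P.roots.toFinset.card ≤ P.roots.card := Multiset.toFinset_card_le _
        _ ≤ P.natDegree := P.card_roots'
        _ = n := hPdeg
    have hTeq : T = P.roots.toFinset :=
      Finset.eq_of_subset_of_card_le hTsub (by omega)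
    have : u ∈ T := by
      rw [hTeq, Multiset.mem_toFinset, mem_roots hPne]; exact hu
    rw [hT, Finset.mem_image] at this
    obtain ⟨k, hk, hku⟩ := this
    exact ⟨k, Finset.mem_range.1 hk, hku⟩
  · intro z hz
    set Q := P.map (algebraMap ℝ ℂ) with hQ
    have hQne : Q ≠ 0 := (Polynomial.map_ne_zero_iff (algebraMap ℝ ℂ).injective).2 hPne
    have hQdeg : Q.natDegree = n := by
      rw [hQ, Polynomial.natDegree_map_eq_of_injective (algebraMap ℝ ℂ).injective, hPdeg]
    set T : Finset ℂ := (Finset.range n).image (fun k => ((ρ k : ℝ) : ℂ)) with hT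
    have hinj' : Set.InjOn (fun k => ((ρ k : ℝ) : ℂ)) (Finset.range n) := by
      intro a ha b hb hab
      exact hinj ha hb (Complex.ofReal_injective hab)
    have hTcard : T.card = n := by
      rw [hT, Finset.card_image_of_injOn hinj', Finset.card_range]
    have hTsub : T ⊆ Q.roots.toFinset := by
      intro v hv
      rw [hT, Finset.mem_image] at hv
      obtain ⟨k, hk, rfl⟩ := hv
      rw [Multiset.mem_toFinset, mem_roots hQne]
      show Q.eval _ = 0
      rw [hQ, Polynomial.eval_map, show ((ρ k : ℝ) : ℂ) = algebraMap ℝ ℂ (ρ k) from rfl,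
        Polynomial.eval₂_at_apply]
      simp [hroot k (Finset.mem_range.1 hk)]
    have hle : Q.roots.toFinset.card ≤ n := by
      calc Q.roots.toFinset.card ≤ Q.roots.card := Multiset.toFinset_card_le _
        _ ≤ Q.natDegree := Q.card_roots'
        _ = n := hQdeg
    have hTeq : T = Q.roots.toFinset :=
      Finset.eq_of_subset_of_card_le hTsub (by omega)
    have : z ∈ T := by
      rw [hTeq, Multiset.mem_toFinset, mem_roots hQne]; exact hz
    rw [hT, Finset.mem_image] at this
    obtain ⟨k, hk, hku⟩ := this
    exact ⟨k, Finset.mem_range.1 hk, hku⟩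


lemma derivative_finset_prod {ι : Type*} [DecidableEq ι] (s : Finset ι) (f : ι → ℝ) :
    derivative (∏ i ∈ s, (X - C (f i))) = ∑ j ∈ s, ∏ i ∈ s.erase j, (X - C (f i)) := by
  induction s using Finset.induction with
  | empty => simp
  | @insert a s ha ih =>
    rw [Finset.prod_insert ha, derivative_mul, ih, Finset.sum_insert ha,
      Finset.erase_insert ha]
    have h1 : derivative (X - C (f a)) = 1 := by simp
    rw [h1, one_mul, Finset.mul_sum]
    congr 1
    refine Finset.sum_congr rfl fun j hj => ?_
    have hja : a ≠ j := fun h => ha (h ▸ hj)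
    rw [Finset.erase_insert_of_ne hja, Finset.prod_insert (fun h => ha (Finset.mem_of_mem_erase h))]

/-- For `0 < x₁ < … < x_n` and `χ ∈ (0, m)`, the degree-`n` polynomial `f`
has exactly one root in each of `(-∞, 0)`, `(x₁^m, x₂^m)`, …, `(x_{n-1}^m, x_n^m)`,
and these account for all complex roots of `f`. -/

theorem stmt_6 (m n : ℕ) (hm : 1 ≤ m) (hn : 1 ≤ n) (x : Fin n → ℝ)
    (hx0 : ∀ i, 0 < x i) (hx : StrictMono x) (χ : ℝ) (hχ : χ ∈ Set.Ioo 0 (m : ℝ)) :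
    (∃! u : ℝ, u ∈ Set.Iio 0 ∧ stmt6f m n x χ u = 0) ∧
    (∀ k : ℕ, ∀ hk : k + 1 < n,
      ∃! u : ℝ,
        u ∈ Set.Ioo (x ⟨k, Nat.lt_of_succ_lt hk⟩ ^ m) (x ⟨k + 1, hk⟩ ^ m) ∧
        stmt6f m n x χ u = 0) ∧
    (∀ z : ℂ, stmt6fC m n x χ z = 0 →
      ∃ u : ℝ, (u : ℂ) = z ∧
        (u ∈ Set.Iio 0 ∨
          ∃ k : ℕ, ∃ hk : k + 1 < n,
            u ∈ Set.Ioo (x ⟨k, Nat.lt_of_succ_lt hk⟩ ^ m) (x ⟨k + 1, hk⟩ ^ m))) := by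
  obtain ⟨hχ0, hχm⟩ := hχ
  have hmpos : (0:ℝ) < m := lt_trans hχ0 hχm
  set y : Fin n → ℝ := fun i => x i ^ m with hy_def
  have hy0 : ∀ i, 0 < y i := fun i => pow_pos (hx0 i) m
  have hymono : StrictMono y := fun a b hab =>
    pow_lt_pow_left₀ (hx hab) (hx0 a).le (by omega)
  set G : Polynomial ℝ := ∏ i : Fin n, (X - C (y i)) with hG
  set P : Polynomial ℝ := C (m:ℝ) * X * derivative G - C (χ * n) * G with hP
  have hdG : derivative G = ∑ j : Fin n, ∏ i ∈ Finset.univ.erase j, (X - C (y i)) := by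
    rw [hG, derivative_finset_prod]
  have hPeval : ∀ u, P.eval u = stmt6f m n x χ u := by
    intro u
    rw [hP, stmt6f]
    rw [hdG]
    simp only [eval_sub, eval_mul, eval_C, eval_X, hdG, hG, eval_finset_sum, eval_prod,
      eval_sub, eval_X, eval_C]
    rw [Finset.mul_sum]
  -- degree facts
  have hGmonic : G.Monic := monic_prod_of_monic _ _ (fun i _ => monic_X_sub_C _)
  have hGdeg : G.natDegree = n := by
    rw [hG, natDegree_prod_of_monic _ _ (fun i _ => monic_X_sub_C _)]
    simp
  have hdGcoeff : (derivative G).coeff (n-1) = n := by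
    rw [coeff_derivative]
    have h1 : n - 1 + 1 = n := by omega
    rw [h1]
    have : G.coeff n = 1 := by
      rw [← hGdeg]; exact hGmonic.coeff_natDegree
    rw [this, one_mul, Nat.cast_sub hn]
    push_cast
    ring
  have hPcoeff : P.coeff n = n * (m - χ) := by
    rw [hP]
    rw [coeff_sub, mul_assoc, coeff_C_mul, coeff_C_mul]
    have h1 : n = (n-1) + 1 := by omega
    rw [h1, coeff_X_mul, ← h1, hdGcoeff]
    have : G.coeff n = 1 := by rw [← hGdeg]; exact hGmonic.coeff_natDegree
    rw [this]
    ring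
  have hPcoeffne : P.coeff n ≠ 0 := by
    rw [hPcoeff]
    have : (0:ℝ) < n := by exact_mod_cast hn
    nlinarith
  have hPdeg : P.natDegree = n := by
    refine le_antisymm ?_ (le_natDegree_of_ne_zero hPcoeffne)
    rw [hP]
    refine le_trans (natDegree_sub_le _ _) (max_le ?_ ?_)
    · refine le_trans (natDegree_mul_le) ?_
      have h1 : (C (m:ℝ) * X).natDegree ≤ 1 :=
        le_trans natDegree_mul_le (by simp)
      have h2 : (derivative G).natDegree ≤ n - 1 :=
        le_trans (natDegree_derivative_le _) (by rw [hGdeg])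
      omega
    · refine le_trans natDegree_mul_le ?_
      rw [natDegree_C, hGdeg, zero_add]
  have hPne : P ≠ 0 := fun h => hPcoeffne (by rw [h]; simp)
  have hxy : ∀ i, x i ^ m = y i := fun i => rfl
  -- value at y k
  have hval : ∀ k : Fin n, P.eval (y k) =
      m * y k * ∏ i ∈ Finset.univ.erase k, (y k - y i) := by
    intro k
    rw [hPeval, stmt6f]
    simp only [hxy]
    have h2 : (∏ i : Fin n, (y k - y i)) = 0 :=
      Finset.prod_eq_zero (Finset.mem_univ k) (by ring)
    rw [h2, mul_zero, sub_zero]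
    refine Finset.sum_eq_single k (fun j _ hj => ?_) (fun h => absurd (Finset.mem_univ k) h)
    have : (∏ i ∈ Finset.univ.erase j, (y k - y i)) = 0 :=
      Finset.prod_eq_zero (Finset.mem_erase.2 ⟨hj.symm, Finset.mem_univ k⟩) (by ring)
    rw [this, mul_zero]
  -- sign change between consecutive y's
  have hpair : ∀ (k : ℕ) (hk : k + 1 < n),
      P.eval (y ⟨k, Nat.lt_of_succ_lt hk⟩) * P.eval (y ⟨k+1, hk⟩) < 0 := by
    intro k hk
    set a : Fin n := ⟨k, Nat.lt_of_succ_lt hk⟩ with ha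
    set b : Fin n := ⟨k+1, hk⟩ with hb
    have hab : a < b := by rw [Fin.lt_def]; simp [ha, hb]
    have hyab : y a < y b := hymono hab
    have hbmem : b ∈ Finset.univ.erase a := Finset.mem_erase.2 ⟨hab.ne', Finset.mem_univ b⟩
    have hamem : a ∈ Finset.univ.erase b := Finset.mem_erase.2 ⟨hab.ne, Finset.mem_univ a⟩
    rw [hval a, hval b,
      ← Finset.mul_prod_erase _ _ hbmem, ← Finset.mul_prod_erase _ _ hamem,
      Finset.erase_right_comm (a := a) (b := b)]
    set S := (Finset.univ.erase b).erase a with hS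
    have hSpos : 0 < (∏ i ∈ S, (y a - y i)) * (∏ i ∈ S, (y b - y i)) := by
      rw [← Finset.prod_mul_distrib]
      refine Finset.prod_pos fun i hi => ?_
      have hia : i ≠ a := (Finset.mem_erase.1 hi).1
      have hib : i ≠ b := (Finset.mem_erase.1 (Finset.mem_erase.1 hi).2).1
      have h1 : i.val ≠ k := fun h => hia (Fin.ext h)
      have h2 : i.val ≠ k + 1 := fun h => hib (Fin.ext h)
      rcases (by omega : i.val < k ∨ k + 1 < i.val) with h | h
      · have hia' : i < a := by rw [Fin.lt_def]; exact h
        have hib' : i < b := by rw [Fin.lt_def]; simp [hb]; omega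
        have := hymono hia'
        have := hymono hib'
        exact mul_pos (by linarith) (by linarith)
      · have hib' : b < i := by rw [Fin.lt_def]; exact h
        have hia' : a < i := by rw [Fin.lt_def]; simp [ha]; omega
        have := hymono hib'
        have := hymono hia'
        exact mul_pos_of_neg_of_neg (by linarith) (by linarith)
    have hmm : (0:ℝ) < (m:ℝ) * (m:ℝ) * (y a * y b) * ((y b - y a)^2) := by
      have h1 := hy0 a; have h2 := hy0 b
      have h3 : (0:ℝ) < (y b - y a)^2 := pow_pos (sub_pos.2 hyab) 2
      exact mul_pos (mul_pos (mul_pos hmpos hmpos) (mul_pos h1 h2)) h3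
    nlinarith [mul_pos hmm hSpos]
  -- the flipped form
  have hflip : ∀ u, P.eval u = (-1:ℝ)^n *
      ∑ j : Fin n, (((χ - m)*u - χ * y j) * ∏ i ∈ Finset.univ.erase j, (y i - u)) := by
    intro u
    have e1 : ∀ j : Fin n, (∏ i ∈ Finset.univ.erase j, (u - y i)) =
        (-1:ℝ)^(n-1) * ∏ i ∈ Finset.univ.erase j, (y i - u) := by
      intro j
      rw [Finset.prod_congr rfl (fun i _ => by ring :
          ∀ i ∈ Finset.univ.erase j, (u - y i) = -(y i - u)), prod_neg',
        Finset.card_erase_of_mem (Finset.mem_univ j), Finset.card_univ, Fintype.card_fin]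
    have e2 : (∏ i : Fin n, (u - y i)) = (-1:ℝ)^n * ∏ i : Fin n, (y i - u) := by
      rw [Finset.prod_congr rfl (fun i _ => by ring :
          ∀ i ∈ Finset.univ, (u - y i) = -(y i - u)), prod_neg',
        Finset.card_univ, Fintype.card_fin]
    have e3 : (n:ℝ) * ∏ i : Fin n, (y i - u) =
        ∑ j : Fin n, (y j - u) * ∏ i ∈ Finset.univ.erase j, (y i - u) := by
      rw [Finset.sum_congr rfl
        (fun j _ => (Finset.mul_prod_erase Finset.univ (fun i => y i - u) (Finset.mem_univ j))),
        Finset.sum_const, Finset.card_univ, Fintype.card_fin, nsmul_eq_mul]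
    have hs' : ((-1:ℝ))^(n-1) = -(-1:ℝ)^n := by
      have h : ((-1:ℝ))^(n-1) * (-1) = (-1)^n := by rw [← pow_succ]; congr 1; omega
      linarith
    rw [hPeval, stmt6f]
    simp only [hxy]
    have e1' : (∑ j : Fin n, (m:ℝ)*u*∏ i ∈ Finset.univ.erase j, (u - y i)) =
        ∑ j : Fin n, (m:ℝ)*u*((-1:ℝ)^(n-1) * ∏ i ∈ Finset.univ.erase j, (y i - u)) :=
      Finset.sum_congr rfl (fun j _ => by rw [e1 j])
    rw [e1', e2,
      show χ * (n:ℝ) * ((-1:ℝ)^n * ∏ i : Fin n, (y i - u))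
        = χ * (-1:ℝ)^n * ((n:ℝ) * ∏ i : Fin n, (y i - u)) from by ring,
      e3, Finset.mul_sum, Finset.mul_sum, ← Finset.sum_sub_distrib]
    exact Finset.sum_congr rfl fun j _ => by rw [hs']; ring
  -- value at 0
  have heval0 : P.eval 0 = -(χ * n) * ((-1:ℝ)^n * ∏ i : Fin n, y i) := by
    rw [hPeval, stmt6f]
    simp only [hxy]
    have h1 : (∏ i : Fin n, ((0:ℝ) - y i)) = (-1:ℝ)^n * ∏ i : Fin n, y i := by
      rw [Finset.prod_congr rfl (fun i _ => by ring :
          ∀ i ∈ Finset.univ, (0:ℝ) - y i = -(y i)), prod_neg',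
        Finset.card_univ, Fintype.card_fin]
    rw [h1]
    simp
  have hQeval : ∀ z : ℂ, (P.map (algebraMap ℝ ℂ)).eval z = stmt6fC m n x χ z := by
    intro z
    have hyc : ∀ i, ((y i : ℝ) : ℂ) = (x i : ℂ) ^ m := by
      intro i; rw [← hxy i]; push_cast; ring
    rw [Polynomial.eval_map, hP, hdG, hG]
    simp only [eval₂_sub, eval₂_mul, eval₂_C, eval₂_X, eval₂_finset_sum, eval₂_finset_prod,
      Complex.coe_algebraMap, hyc]
    rw [stmt6fC, Finset.mul_sum]
    push_cast
    rfl
  -- the point u₀ far to the left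
  have hnlt : n - 1 < n := by omega
  set B := y ⟨n-1, hnlt⟩ with hBdef
  have hyB : ∀ j, y j ≤ B :=
    fun j => hymono.monotone (by rw [Fin.le_def]; exact Nat.le_pred_of_lt j.isLt)
  set u₀ : ℝ := -((χ * B + 1)/((m:ℝ) - χ)) with hu₀def
  have hB0 : 0 < B := hy0 _
  have hmχ : (0:ℝ) < (m:ℝ) - χ := by linarith
  have hu₀neg : u₀ < 0 := by
    have h1 : 0 < χ * B + 1 := by nlinarith
    have := div_pos h1 hmχ
    rw [hu₀def]; linarith
  have hkey : (χ - (m:ℝ)) * u₀ = χ * B + 1 := by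
    rw [hu₀def]; field_simp; ring
  have hbrack : ∀ j : Fin n, 0 < (χ - (m:ℝ)) * u₀ - χ * y j := by
    intro j; rw [hkey]; nlinarith [hyB j, hy0 j]
  have hEpos : 0 < (-1:ℝ)^n * P.eval u₀ := by
    rw [hflip u₀, ← mul_assoc]
    have hone : (-1:ℝ)^n * (-1:ℝ)^n = 1 := by
      rw [← pow_add]; exact Even.neg_one_pow ⟨n, rfl⟩
    rw [hone, one_mul]
    refine Finset.sum_pos (fun j _ => mul_pos (hbrack j) (Finset.prod_pos fun i _ => ?_))
      ⟨⟨0, by omega⟩, Finset.mem_univ _⟩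
    have := hy0 i; linarith
  have hcont : Continuous fun u : ℝ => P.eval u := P.continuous
  have hprod0 : P.eval u₀ * P.eval 0 < 0 := by
    have hy_pos : 0 < ∏ i : Fin n, y i := Finset.prod_pos fun i _ => hy0 i
    have hnpos : (0:ℝ) < n := by exact_mod_cast hn
    rw [heval0]
    nlinarith [mul_pos (mul_pos (mul_pos hχ0 hnpos) hy_pos) hEpos]
  have hroot0 : ∃ u ∈ Set.Ioo u₀ 0, P.eval u = 0 := ivt_root hcont hu₀neg hprod0
  have hrootk : ∀ (k : ℕ) (hk : k+1 < n),
      ∃ u ∈ Set.Ioo (y ⟨k, Nat.lt_of_succ_lt hk⟩) (y ⟨k+1, hk⟩), P.eval u = 0 :=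
    fun k hk => ivt_root hcont (hymono (Fin.mk_lt_mk.2 (lt_add_one k))) (hpair k hk)
  set ρ : ℕ → ℝ := fun k =>
    if _ : k = 0 then Classical.choose hroot0
    else if h : k < n then Classical.choose (hrootk (k-1) (by omega)) else 0 with hρdef
  have hρ0 : ρ 0 ∈ Set.Ioo u₀ 0 ∧ P.eval (ρ 0) = 0 := by
    have e : ρ 0 = Classical.choose hroot0 := rfl
    rw [e]
    exact Classical.choose_spec hroot0
  have hρk : ∀ (k : ℕ) (hk : k+1 < n),
      ρ (k+1) ∈ Set.Ioo (y ⟨k, Nat.lt_of_succ_lt hk⟩) (y ⟨k+1, hk⟩) ∧ P.eval (ρ (k+1)) = 0 := by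
    intro k hk
    have e : ρ (k+1) = if _ : k + 1 < n then
        Classical.choose (hrootk (k+1-1) (by omega)) else 0 := rfl
    rw [e, dif_pos hk]
    exact Classical.choose_spec (hrootk k hk)
  have hρmono : ∀ a b, a < b → b < n → ρ a < ρ b := by
    intro a b hab hbn
    obtain ⟨b', rfl⟩ : ∃ b', b = b' + 1 := ⟨b-1, by omega⟩
    have hb := hρk b' hbn
    cases a with
    | zero =>
      have h0 := hρ0.1.2
      have h1 := hy0 (⟨b', Nat.lt_of_succ_lt hbn⟩ : Fin n)
      have h2 := hb.1.1
      linarith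
    | succ a' =>
      have ha := hρk a' (by omega)
      have h1 := ha.1.2
      have h2 : y (⟨a'+1, by omega⟩ : Fin n) ≤ y ⟨b', Nat.lt_of_succ_lt hbn⟩ :=
        hymono.monotone (Fin.mk_le_mk.2 (by omega))
      have h3 := hb.1.1
      linarith
  have hρroot : ∀ k, k < n → P.eval (ρ k) = 0 := by
    intro k hkn
    cases k with
    | zero => exact hρ0.2
    | succ k' => exact (hρk k' hkn).2
  obtain ⟨hreal, hcomplex⟩ := count_roots_aux n hn P hPne hPdeg ρ hρmono hρroot
  refine ⟨?_, ?_, ?_⟩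
  · refine ⟨ρ 0, ⟨hρ0.1.2, by rw [← hPeval]; exact hρ0.2⟩, ?_⟩
    rintro u ⟨hu1, hu2⟩
    obtain ⟨k, hkn, rfl⟩ := hreal u (by rw [hPeval]; exact hu2)
    cases k with
    | zero => rfl
    | succ k' =>
      exfalso
      have h1 := (hρk k' hkn).1.1
      have h2 := hy0 (⟨k', Nat.lt_of_succ_lt hkn⟩ : Fin n)
      have h3 : ρ (k'+1) < 0 := hu1
      linarith
  · intro k hk
    refine ⟨ρ (k+1), ⟨(hρk k hk).1, by rw [← hPeval]; exact (hρk k hk).2⟩, ?_⟩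
    rintro u ⟨hu1, hu2⟩
    obtain ⟨j, hjn, rfl⟩ := hreal u (by rw [hPeval]; exact hu2)
    have hu1' : ρ j ∈ Set.Ioo (y ⟨k, Nat.lt_of_succ_lt hk⟩) (y ⟨k+1, hk⟩) := hu1
    cases j with
    | zero =>
      exfalso
      have h1 := hρ0.1.2
      have h2 := hy0 (⟨k, Nat.lt_of_succ_lt hk⟩ : Fin n)
      have h3 := hu1'.1
      linarith
    | succ j' =>
      rcases lt_trichotomy j' k with h | h | h
      · exfalso
        have h1 := (hρk j' hjn).1.2
        have h2 : y (⟨j'+1, hjn⟩ : Fin n) ≤ y ⟨k, Nat.lt_of_succ_lt hk⟩ :=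
          hymono.monotone (Fin.mk_le_mk.2 (by omega))
        have h3 := hu1'.1
        linarith
      · rw [h]
      · exfalso
        have h1 := (hρk j' hjn).1.1
        have h2 : y (⟨k+1, hk⟩ : Fin n) ≤ y ⟨j', Nat.lt_of_succ_lt hjn⟩ :=
          hymono.monotone (Fin.mk_le_mk.2 (by omega))
        have h3 := hu1'.2
        linarith
  · intro z hz
    have hz' : (P.map (algebraMap ℝ ℂ)).eval z = 0 := by rw [hQeval]; exact hz
    obtain ⟨k, hkn, hρz⟩ := hcomplex z hz'
    refine ⟨ρ k, hρz, ?_⟩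
    cases k with
    | zero => exact Or.inl hρ0.1.2
    | succ k' => exact Or.inr ⟨k', hkn, (hρk k' hkn).1⟩
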